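/- Let D ⊂ O ⊂ ℝⁿ with O open, and let Q, W : O → ℝ≥0 be continuous functions with Q(x) = W(x) = 0 for all x ∈ D, Q(x) > 0 for x ∈ O∖D, Q(O) = ℝ≥0, and such that for every r ≥ 0 the sublevel set {x ∈ O : Q(x) ≤ r} is compact. Then there exists a class-K∞ function ζ such that W(x) ≤ ζ(Q(x)) for all x ∈ O. -/

import Mathlib

def ClassK (a : ℝ → ℝ) : Prop :=
  ContinuousOn a (Set.Ici 0) ∧ StrictMonoOn a (Set.Ici 0) ∧ a 0 = 0

def ClassKInf (a : ℝ → ℝ) : Prop :=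
  ClassK a ∧ Filter.Tendsto a Filter.atTop Filter.atTop

def ClassKL (σ : ℝ → ℝ → ℝ) : Prop :=
  ContinuousOn (fun p : ℝ × ℝ => σ p.1 p.2) (Set.Ici 0 ×ˢ Set.Ici 0) ∧
  (∀ t ≥ (0:ℝ), StrictMonoOn (fun s => σ s t) (Set.Ici 0) ∧ σ 0 t = 0) ∧
  (∀ s ≥ (0:ℝ), AntitoneOn (fun t => σ s t) (Set.Ici 0) ∧
    Filter.Tendsto (fun t => σ s t) Filter.atTop (nhds 0))

theorem stmt1 (n : ℕ) (O D : Set (EuclideanSpace ℝ (Fin n))) (hO : IsOpen O)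
    (hDO : D ⊆ O) (Q W : EuclideanSpace ℝ (Fin n) → ℝ)
    (hQc : ContinuousOn Q O) (hWc : ContinuousOn W O)
    (hQnn : ∀ x ∈ O, 0 ≤ Q x) (hWnn : ∀ x ∈ O, 0 ≤ W x)
    (hD : ∀ x ∈ D, Q x = 0 ∧ W x = 0)
    (hQpos : ∀ x ∈ O \ D, 0 < Q x)
    (hQsurj : Q '' O = Set.Ici 0)
    (hcomp : ∀ r ≥ (0:ℝ), IsCompact {x ∈ O | Q x ≤ r}) :
    ∃ ζ : ℝ → ℝ, ClassKInf ζ ∧ ∀ x ∈ O, W x ≤ ζ (Q x) := by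
  classical
  set M : ℝ → ℝ := fun r => sSup (W '' {x ∈ O | Q x ≤ r}) with hMdef
  have hbdd : ∀ r : ℝ, 0 ≤ r → BddAbove (W '' {x ∈ O | Q x ≤ r}) := fun r hr =>
    ((hcomp r hr).image_of_continuousOn (hWc.mono fun x hx => hx.1)).bddAbove
  have hne : ∀ r : ℝ, 0 ≤ r → (W '' {x ∈ O | Q x ≤ r}).Nonempty := by
    intro r hr
    have : r ∈ Q '' O := by rw [hQsurj]; exact hr
    obtain ⟨x, hxO, hxQ⟩ := this
    exact ⟨W x, ⟨x, ⟨hxO, hxQ.le⟩, rfl⟩⟩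
  have hMnonneg : ∀ r, 0 ≤ M r := by
    intro r
    apply Real.sSup_nonneg
    rintro y ⟨x, hx, rfl⟩
    exact hWnn x hx.1
  have hMmono : Monotone M := by
    intro r r' hrr'
    rcases le_or_gt 0 r with hr | hr
    · exact csSup_le_csSup (hbdd r' (hr.trans hrr')) (hne r hr)
        (Set.image_mono fun x hx => ⟨hx.1, hx.2.trans hrr'⟩)
    · have hempty : {x ∈ O | Q x ≤ r} = ∅ := by
        ext x
        simp only [Set.mem_setOf_eq, Set.mem_empty_iff_false, iff_false, not_and]
        intro hxO hxQ
        exact absurd (hQnn x hxO) (by linarith)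
      have : M r = 0 := by simp [hMdef, hempty]
      rw [this]
      exact hMnonneg r'
  have hM0 : M 0 = 0 := by
    apply le_antisymm _ (hMnonneg 0)
    apply Real.sSup_le _ le_rfl
    rintro y ⟨x, ⟨hxO, hxQ⟩, rfl⟩
    have hxD : x ∈ D := by
      by_contra hxD
      exact absurd (hQpos x ⟨hxO, hxD⟩) (by have := hQnn x hxO; linarith [le_antisymm hxQ (hQnn x hxO)])
    exact (hD x hxD).2.le
  have hWM : ∀ x ∈ O, W x ≤ M (Q x) := fun x hx =>
    le_csSup (hbdd _ (hQnn x hx)) ⟨x, ⟨hx, le_rfl⟩, rfl⟩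
  have hMii : ∀ a b : ℝ, IntervalIntegrable M MeasureTheory.volume a b := fun a b =>
    hMmono.intervalIntegrable
  -- the smoothing integral
  set c : ℝ → ℝ := fun r => ∫ t in (0:ℝ)..1, M (r * t + r) with hcdef
  have hint : ∀ r : ℝ, 0 ≤ r → IntervalIntegrable (fun t => M (r * t + r))
      MeasureTheory.volume 0 1 := by
    intro r hr
    have hmono : Monotone fun t : ℝ => M (r * t + r) := by
      apply hMmono.comp
      intro a b hab
      exact add_le_add_left (mul_le_mul_of_nonneg_left hab hr) r
    exact hmono.intervalIntegrable
  have hcnonneg : ∀ r : ℝ, 0 ≤ c r := by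
    intro r
    apply intervalIntegral.integral_nonneg zero_le_one
    intro u _
    exact hMnonneg _
  have hc0 : c 0 = 0 := by
    simp [hcdef, hM0]
  have hcmono : ∀ r r' : ℝ, 0 ≤ r → r ≤ r' → c r ≤ c r' := by
    intro r r' hr hrr'
    apply intervalIntegral.integral_mono_on zero_le_one (hint r hr) (hint r' (hr.trans hrr'))
    intro t ht
    apply hMmono
    nlinarith [ht.1]
  have hcM : ∀ r : ℝ, 0 ≤ r → M r ≤ c r := by
    intro r hr
    have h1 : (∫ _ in (0:ℝ)..1, M r) ≤ c r := by
      apply intervalIntegral.integral_mono_on zero_le_one intervalIntegrable_const (hint r hr)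
      intro t ht
      apply hMmono
      nlinarith [ht.1]
    simpa using h1
  have hcle : ∀ r : ℝ, 0 ≤ r → c r ≤ M (2 * r) := by
    intro r hr
    have h1 : c r ≤ ∫ _ in (0:ℝ)..1, M (2 * r) := by
      apply intervalIntegral.integral_mono_on zero_le_one (hint r hr) intervalIntegrable_const
      intro t ht
      apply hMmono
      nlinarith [ht.2]
    simpa using h1
  set F : ℝ → ℝ := fun x => ∫ t in (0:ℝ)..x, M t with hFdef
  have hF : Continuous F := intervalIntegral.continuous_primitive hMii 0
  have hcF : ∀ r : ℝ, r ≠ 0 → c r = r⁻¹ * (F (2 * r) - F r) := by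
    intro r hr
    have h1 : c r = r⁻¹ • ∫ x in (r * 0 + r)..(r * 1 + r), M x :=
      intervalIntegral.integral_comp_mul_add M hr r
    have h2 : F (2 * r) - F r = ∫ x in r..(2 * r), M x :=
      intervalIntegral.integral_interval_sub_left (hMii 0 (2 * r)) (hMii 0 r)
    have e1 : r * 0 + r = r := by ring
    have e2 : r * 1 + r = 2 * r := by ring
    rw [h1, e1, e2, h2, smul_eq_mul]
  -- right-continuity of M at 0
  have hsmall : ∀ ε : ℝ, 0 < ε → ∃ δ : ℝ, 0 < δ ∧ M δ < ε := by
    intro ε hε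
    by_contra hcon
    push_neg at hcon
    have hpts : ∀ m : ℕ, ∃ x, x ∈ O ∧ Q x ≤ 1 / (m + 1 : ℝ) ∧ ε / 2 < W x := by
      intro m
      have hpos : (0:ℝ) < 1 / (m + 1 : ℝ) := by positivity
      have hlt : ε / 2 < M (1 / (m + 1 : ℝ)) :=
        lt_of_lt_of_le (half_lt_self hε) (hcon _ hpos)
      obtain ⟨y, ⟨x, ⟨hxO, hxQ⟩, rfl⟩, hy⟩ :=
        exists_lt_of_lt_csSup (hne _ hpos.le) hlt
      exact ⟨x, hxO, hxQ, hy⟩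
    choose x hxO hxQ hxW using hpts
    have hxK : ∀ m, x m ∈ {y ∈ O | Q y ≤ 1} := by
      intro m
      refine ⟨hxO m, le_trans (hxQ m) ?_⟩
      rw [div_le_one (by positivity)]
      linarith [Nat.cast_nonneg (α := ℝ) m]
    obtain ⟨a, ha, φ, hφ, hconv⟩ := (hcomp 1 zero_le_one).tendsto_subseq hxK
    have haO : a ∈ O := ha.1
    have hQa : Filter.Tendsto (fun m => Q (x (φ m))) Filter.atTop (nhds (Q a)) :=
      ((hQc.continuousAt (hO.mem_nhds haO)).tendsto).comp hconv
    have hQa0 : Q a = 0 := by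
      have hub : Filter.Tendsto (fun m : ℕ => 1 / ((φ m : ℝ) + 1)) Filter.atTop (nhds 0) := by
        apply Filter.Tendsto.comp tendsto_one_div_add_atTop_nhds_zero_nat
          (hφ.tendsto_atTop)
      have h1 : Filter.Tendsto (fun m => Q (x (φ m))) Filter.atTop (nhds 0) := by
        apply squeeze_zero (fun m => hQnn _ (hxO _)) (fun m => hxQ (φ m)) hub
      exact tendsto_nhds_unique hQa h1
    have haD : a ∈ D := by
      by_contra haD
      exact absurd hQa0 (ne_of_gt (hQpos a ⟨haO, haD⟩))
    have hWa : Filter.Tendsto (fun m => W (x (φ m))) Filter.atTop (nhds (W a)) :=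
      ((hWc.continuousAt (hO.mem_nhds haO)).tendsto).comp hconv
    have : ε / 2 ≤ W a :=
      ge_of_tendsto hWa (Filter.Eventually.of_forall fun m => (hxW (φ m)).le)
    rw [(hD a haD).2] at this
    linarith
  have hMten : Filter.Tendsto M (nhdsWithin 0 (Set.Ici 0)) (nhds 0) := by
    rw [Metric.tendsto_nhdsWithin_nhds]
    intro ε hε
    obtain ⟨δ, hδ, hMδ⟩ := hsmall ε hε
    refine ⟨δ, hδ, fun {r} hr hdist => ?_⟩
    rw [Real.dist_eq, sub_zero] at hdist ⊢
    rw [abs_of_nonneg (hMnonneg r)]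
    have hrδ : r ≤ δ := by
      rw [abs_of_nonneg hr] at hdist
      exact hdist.le
    exact lt_of_le_of_lt (hMmono hrδ) hMδ
  set ζ : ℝ → ℝ := fun r => r + c r with hζdef
  refine ⟨ζ, ⟨⟨?_, ?_, ?_⟩, ?_⟩, ?_⟩
  · -- continuity on Ici 0
    intro r hr
    rcases eq_or_lt_of_le (Set.mem_Ici.mp hr : (0:ℝ) ≤ r) with hr0 | hr0
    · subst hr0
      have hctend : Filter.Tendsto c (nhdsWithin 0 (Set.Ici 0)) (nhds 0) := by
        apply squeeze_zero' (Filter.Eventually.of_forall fun s => hcnonneg s)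
        · filter_upwards [eventually_mem_nhdsWithin] with s hs
          exact hcle s hs
        · have h2 : Filter.Tendsto (fun s : ℝ => 2 * s) (nhdsWithin 0 (Set.Ici 0))
              (nhdsWithin 0 (Set.Ici 0)) := by
            apply Filter.Tendsto.inf
            · have hc2 : Continuous (fun s : ℝ => 2 * s) := continuous_const.mul continuous_id
              have := hc2.tendsto 0
              simpa using this
            · rw [Filter.tendsto_principal]
              filter_upwards [Filter.mem_principal_self _] with s hs
              simp only [Set.mem_Ici] at hs ⊢
              linarith
          exact hMten.comp h2
      have : Filter.Tendsto ζ (nhdsWithin 0 (Set.Ici 0)) (nhds (ζ 0)) := by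
        have hid : Filter.Tendsto (fun s : ℝ => s) (nhdsWithin 0 (Set.Ici 0)) (nhds 0) :=
          Filter.Tendsto.mono_left Filter.tendsto_id nhdsWithin_le_nhds
        have := hid.add hctend
        simpa [hζdef, hc0] using this
      exact this
    · apply ContinuousAt.continuousWithinAt
      have hg : ContinuousAt (fun s : ℝ => s + s⁻¹ * (F (2 * s) - F s)) r := by
        apply ContinuousAt.add continuousAt_id
        apply ContinuousAt.mul (continuousAt_inv₀ (ne_of_gt hr0))
        exact ((hF.comp (continuous_const.mul continuous_id)).continuousAt).sub
          hF.continuousAt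
      apply hg.congr
      filter_upwards [Ioi_mem_nhds hr0] with s hs
      simp only [hζdef]
      rw [hcF s (ne_of_gt hs)]
  · -- strict mono
    intro r hr r' hr' hlt
    simp only [hζdef]
    exact add_lt_add_of_lt_of_le hlt (hcmono r r' hr hlt.le)
  · simp [hζdef, hc0]
  · -- tendsto atTop
    apply Filter.tendsto_atTop_mono (fun r => ?_) Filter.tendsto_id
    simp only [hζdef, id]
    linarith [hcnonneg r]
  · intro x hx
    have h1 : W x ≤ M (Q x) := hWM x hx
    have h2 : M (Q x) ≤ c (Q x) := hcM _ (hQnn x hx)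
    have h3 : (0:ℝ) ≤ Q x := hQnn x hx
    simp only [hζdef]
    linarith
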